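/- Suppose m = p₁·p₂·p₃ where p₁, p₂, p₃ are pairwise coprime integers with 1 < p₁ < p₂ < p₃. Then property P₂ fails for m: there exists a squarefree reducible polynomial f ∈ 𝔽₂[X] of degree m with o(f) = m. -/

import Mathlib

open Polynomial

lemma nat_dvd_of_two_pow_sub_one_dvd {d : ℕ} (hd : 0 < d) :
    ∀ n : ℕ, (2 ^ d - 1 ∣ 2 ^ n - 1) → d ∣ n := by
  intro n
  induction n using Nat.strong_induction_on with
  | _ n ih =>
    intro h
    rcases Nat.lt_or_ge n d with hlt | hge
    · rcases Nat.eq_zero_or_pos n with rfl | hn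
      · exact dvd_zero d
      · exfalso
        have h1 : (1:ℕ) < 2 ^ n := Nat.one_lt_two_pow_iff.2 (by omega)
        have h2 : (2:ℕ) ^ n < 2 ^ d := Nat.pow_lt_pow_right (by norm_num) hlt
        have := Nat.le_of_dvd (by omega) h
        omega
    · have e2 : (2:ℕ) ^ n = 2 ^ (n - d) * 2 ^ d := by
        rw [← pow_add]; congr 1; omega
      have h3 : (2 ^ d - 1 : ℕ) ∣ (2 ^ (n - d) * (2 ^ d - 1)) := Dvd.dvd.mul_left dvd_rfl _
      have hle1 : (1:ℕ) ≤ 2 ^ d := Nat.one_le_two_pow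
      have hle2 : (1:ℕ) ≤ 2 ^ (n - d) := Nat.one_le_two_pow
      have h4 : 2 ^ (n - d) * (2 ^ d - 1) = 2 ^ n - 2 ^ (n - d) := by
        rw [Nat.mul_sub, mul_one, ← e2]
      have key : (2 ^ d - 1 : ℕ) ∣ (2 ^ (n - d) - 1) := by
        have h5 := Nat.dvd_sub h h3
        rw [h4] at h5
        have h6 : (2 ^ n - 1) - (2 ^ n - 2 ^ (n - d)) = 2 ^ (n - d) - 1 := by
          have : (2:ℕ) ^ (n - d) ≤ 2 ^ n := Nat.pow_le_pow_right (by norm_num) (by omega)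
          omega
        rwa [h6] at h5
      rcases Nat.eq_zero_or_pos (n - d) with h0 | hpos
      · have : n = d := by omega
        exact this ▸ dvd_rfl
      · have hdvd := ih (n - d) (by omega) key
        have := Nat.dvd_add hdvd (dvd_refl d)
        rwa [Nat.sub_add_cancel hge] at this

lemma irred_dvd_X_pow_sub_X_iff {g : (ZMod 2)[X]} (hg : Irreducible g) (n : ℕ) :
    g ∣ X ^ 2 ^ n - X ↔ g.natDegree ∣ n := by
  rcases Nat.eq_zero_or_pos n with rfl | hn
  · simp
  haveI : Fact (Irreducible g) := ⟨hg⟩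
  have hne : g ≠ 0 := hg.ne_zero
  set d := g.natDegree with hd_def
  have hd : 0 < d := hg.natDegree_pos
  let pb := AdjoinRoot.powerBasis hne
  haveI : Fintype (AdjoinRoot g) := Module.fintypeOfFintype pb.basis
  have hcard : Fintype.card (AdjoinRoot g) = 2 ^ d := by
    rw [Module.card_eq_pow_finrank (K := ZMod 2), ZMod.card, pb.finrank,
      AdjoinRoot.powerBasis_dim]
  have hroot_iff : g ∣ X ^ 2 ^ n - X ↔
      (AdjoinRoot.root g) ^ 2 ^ n = AdjoinRoot.root g := by
    rw [← AdjoinRoot.mk_eq_zero, map_sub, map_pow, AdjoinRoot.mk_X, sub_eq_zero]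
  rw [hroot_iff]
  constructor
  · intro hroot
    -- extend to all elements via the Frobenius algebra endomorphism
    haveI : CharP (AdjoinRoot g) 2 :=
      charP_of_injective_algebraMap (algebraMap (ZMod 2) (AdjoinRoot g)).injective 2
    have hzmod : ∀ c : ZMod 2, c ^ 2 ^ n = c := by
      intro c
      have := FiniteField.pow_card_pow (K := ZMod 2) n c
      rwa [ZMod.card] at this
    let φ : AdjoinRoot g →ₐ[ZMod 2] AdjoinRoot g :=
      AlgHom.mk' (iterateFrobenius (AdjoinRoot g) 2 n) (by
        intro c x
        simp only [iterateFrobenius_def, Algebra.smul_def, mul_pow, map_pow]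
        rw [← map_pow, hzmod])
    have hφ : ∀ x : AdjoinRoot g, x ^ 2 ^ n = x := by
      have hle : Algebra.adjoin (ZMod 2) ({AdjoinRoot.root g} : Set (AdjoinRoot g)) ≤
          AlgHom.equalizer φ (AlgHom.id (ZMod 2) (AdjoinRoot g)) := by
        apply Algebra.adjoin_le
        intro x hx
        rcases hx with rfl
        show φ _ = _
        simpa [φ, iterateFrobenius_def] using hroot
      rw [AdjoinRoot.adjoinRoot_eq_top] at hle
      intro x
      have hx : x ∈ AlgHom.equalizer φ (AlgHom.id (ZMod 2) (AdjoinRoot g)) :=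
        hle (Algebra.mem_top)
      simpa [φ, iterateFrobenius_def] using hx
    -- apply to a generator of the unit group
    obtain ⟨ζ, hζ⟩ := IsCyclic.exists_generator (α := (AdjoinRoot g)ˣ)
    have hord : orderOf ζ = 2 ^ d - 1 := by
      rw [orderOf_eq_card_of_forall_mem_zpowers hζ, Nat.card_units, Nat.card_eq_fintype_card, hcard]
    have hζpow : ζ ^ (2 ^ n - 1) = 1 := by
      have h1 : (ζ : AdjoinRoot g) ^ 2 ^ n = (ζ : AdjoinRoot g) := hφ ζ
      have h2 : ζ ^ 2 ^ n = ζ := Units.ext (by push_cast [Units.val_pow_eq_pow_val]; exact h1)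
      have h3 : ζ ^ (2 ^ n - 1) * ζ = ζ := by
        rw [← pow_succ]
        have : 2 ^ n - 1 + 1 = 2 ^ n := by
          have : (1:ℕ) ≤ 2 ^ n := Nat.one_le_two_pow
          omega
        rw [this, h2]
      calc ζ ^ (2 ^ n - 1) = ζ ^ (2 ^ n - 1) * ζ * ζ⁻¹ := by group
        _ = ζ * ζ⁻¹ := by rw [h3]
        _ = 1 := mul_inv_cancel ζ
    have hdvd : 2 ^ d - 1 ∣ 2 ^ n - 1 := by
      rw [← hord]; exact orderOf_dvd_of_pow_eq_one hζpow
    exact nat_dvd_of_two_pow_sub_one_dvd hd n hdvd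
  · rintro ⟨k, rfl⟩
    have : (2:ℕ) ^ (d * k) = (2 ^ d) ^ k := by rw [← pow_mul]
    rw [this, ← hcard]
    exact FiniteField.pow_card_pow k _

lemma aux_sq_le_two_pow : ∀ a : ℕ, 6 ≤ a → (a + 1) * (a + 1) ≤ 2 ^ a := by
  intro a ha
  induction a, ha using Nat.le_induction with
  | base => norm_num
  | succ a ha ih =>
    have h1 : (a + 2) * (a + 2) ≤ 2 * ((a + 1) * (a + 1)) := by nlinarith
    calc (a + 1 + 1) * (a + 1 + 1) ≤ 2 * ((a + 1) * (a + 1)) := h1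
      _ ≤ 2 * 2 ^ a := by omega
      _ = 2 ^ (a + 1) := (pow_succ' 2 a).symm

lemma aux_mul_le_two_pow : ∀ a : ℕ, 3 ≤ a → a * (a + 2) ≤ 2 ^ (a + 1) := by
  intro a ha
  induction a, ha using Nat.le_induction with
  | base => norm_num
  | succ a ha ih =>
    have h1 : (a + 1) * (a + 3) ≤ 2 * (a * (a + 2)) := by nlinarith
    calc (a + 1) * (a + 1 + 2) ≤ 2 * (a * (a + 2)) := by nlinarith
      _ ≤ 2 * 2 ^ (a + 1) := by omega
      _ = 2 ^ (a + 2) := (pow_succ' 2 (a+1)).symm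

lemma bound_big {n k : ℕ} (hn : 7 ≤ n) (hk : k ≤ n) :
    k * n + 2 ^ (n / 2 + 1) ≤ 2 ^ n := by
  obtain ⟨a, rfl⟩ : ∃ a, n = a + 1 := ⟨n - 1, by omega⟩
  have h1 : k * (a + 1) ≤ (a + 1) * (a + 1) := Nat.mul_le_mul_right _ hk
  have h2 : (a + 1) * (a + 1) ≤ 2 ^ a := aux_sq_le_two_pow a (by omega)
  have h3 : (2:ℕ) ^ ((a + 1) / 2 + 1) ≤ 2 ^ a :=
    Nat.pow_le_pow_right (by norm_num) (by omega)
  have h4 : (2:ℕ) ^ (a + 1) = 2 ^ a + 2 ^ a := by rw [pow_succ]; ring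
  omega

lemma bound_small {n k : ℕ} (hn : 5 ≤ n) (hk : k ≤ n - 2) :
    k * n + 2 ^ (n / 2 + 1) ≤ 2 ^ n := by
  obtain ⟨a, rfl⟩ : ∃ a, n = a + 2 := ⟨n - 2, by omega⟩
  have h1 : k * (a + 2) ≤ a * (a + 2) := Nat.mul_le_mul_right _ (by omega)
  have h2 : a * (a + 2) ≤ 2 ^ (a + 1) := aux_mul_le_two_pow a (by omega)
  have h3 : (2:ℕ) ^ ((a + 2) / 2 + 1) ≤ 2 ^ (a + 1) :=
    Nat.pow_le_pow_right (by norm_num) (by omega)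
  have h4 : (2:ℕ) ^ (a + 2) = 2 ^ (a + 1) + 2 ^ (a + 1) := by rw [pow_succ]; ring
  omega


lemma sum_two_pow_Icc_le (K : ℕ) : (∑ e ∈ Finset.Icc 1 K, 2 ^ e) ≤ 2 ^ (K + 1) := by
  induction K with
  | zero => simp
  | succ K ih =>
    rw [Finset.sum_Icc_succ_top (by omega : 1 ≤ K + 1)]
    have : (2:ℕ) ^ (K + 1 + 1) = 2 ^ (K+1) + 2 ^ (K+1) := by ring
    omega

lemma exists_finset_irreducibles (n k : ℕ) (hn : 0 < n)
    (hb : k * n + 2 ^ (n / 2 + 1) ≤ 2 ^ n) :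
    ∃ s : Finset (ZMod 2)[X],
      s.card = k ∧ ∀ g ∈ s, g.Monic ∧ Irreducible g ∧ g.natDegree = n := by
  classical
  haveI : Fact (Nat.Prime 2) := ⟨Nat.prime_two⟩
  set F := GaloisField 2 n with hF
  haveI : Fintype F := Fintype.ofFinite F
  have hcardF : Fintype.card F = 2 ^ n := by
    rw [← Nat.card_eq_fintype_card]; exact GaloisField.card 2 n hn.ne'
  have hfinrank : Module.finrank (ZMod 2) F = n := GaloisField.finrank 2 hn.ne'
  have hint : ∀ x : F, IsIntegral (ZMod 2) x := fun x => IsIntegral.of_finite (ZMod 2) x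
  set T : Finset F := Finset.univ.filter (fun x => (minpoly (ZMod 2) x).natDegree = n) with hT
  set s₀ : Finset (ZMod 2)[X] := T.image (fun x => minpoly (ZMod 2) x) with hs₀
  -- the fiber bound
  have hfiber : ∀ q ∈ s₀, (T.filter (fun x => minpoly (ZMod 2) x = q)).card ≤ n := by
    intro q hq
    obtain ⟨x₀, hx₀T, hx₀⟩ := Finset.mem_image.1 hq
    have hqmonic : q.Monic := hx₀ ▸ minpoly.monic (hint x₀)
    have hqdeg : q.natDegree = n := by
      rw [← hx₀]; exact (Finset.mem_filter.1 hx₀T).2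
    have hsub : (T.filter (fun x => minpoly (ZMod 2) x = q)) ⊆ (q.aroots F).toFinset := by
      intro x hx
      obtain ⟨-, hxq⟩ := Finset.mem_filter.1 hx
      rw [Multiset.mem_toFinset, mem_aroots]
      exact ⟨hqmonic.ne_zero, by rw [← hxq]; exact minpoly.aeval _ _⟩
    calc (T.filter (fun x => minpoly (ZMod 2) x = q)).card
        ≤ (q.aroots F).toFinset.card := Finset.card_le_card hsub
      _ ≤ (q.aroots F).card := Multiset.toFinset_card_le _
      _ ≤ (q.map (algebraMap (ZMod 2) F)).natDegree := card_roots' _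
      _ = q.natDegree := natDegree_map _
      _ = n := hqdeg
  have hTle : T.card ≤ n * s₀.card := Finset.card_le_mul_card_image T n hfiber
  -- the complement bound
  have hcompl : (Finset.univ.filter
      (fun x : F => ¬ (minpoly (ZMod 2) x).natDegree = n)).card ≤ 2 ^ (n / 2 + 1) := by
    set B : Finset F := (Finset.Icc 1 (n / 2)).biUnion
      (fun e => Finset.univ.filter (fun x : F => x ^ 2 ^ e = x)) with hB
    have hsub : (Finset.univ.filter
        (fun x : F => ¬ (minpoly (ZMod 2) x).natDegree = n)) ⊆ B := by
      intro x hx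
      have hxdeg : (minpoly (ZMod 2) x).natDegree ≠ n := (Finset.mem_filter.1 hx).2
      set e := (minpoly (ZMod 2) x).natDegree with he
      have hirr : Irreducible (minpoly (ZMod 2) x) := minpoly.irreducible (hint x)
      have hepos : 0 < e := minpoly.natDegree_pos (hint x)
      have hedvd : e ∣ n := hfinrank ▸ minpoly.degree_dvd (hint x)
      have hele : e ≤ n / 2 := by
        obtain ⟨c, hc⟩ := hedvd
        have hc0 : c ≠ 0 := by
          rintro rfl
          rw [mul_zero] at hc
          omega
        have hc1 : c ≠ 1 := by
          rintro rfl
          rw [mul_one] at hc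
          exact hxdeg hc.symm
        have h2c : e * 2 ≤ e * c := Nat.mul_le_mul_left e (by omega)
        rw [← hc] at h2c
        omega
      have hxfix : x ^ 2 ^ e = x := by
        have hdvd : minpoly (ZMod 2) x ∣ X ^ 2 ^ e - X :=
          (irred_dvd_X_pow_sub_X_iff hirr e).2 dvd_rfl
        obtain ⟨h, hh⟩ := hdvd
        have := congrArg (aeval x) hh
        rw [map_sub, map_pow, aeval_X, map_mul, minpoly.aeval, zero_mul] at this
        exact sub_eq_zero.1 this
      exact Finset.mem_biUnion.2 ⟨e, Finset.mem_Icc.2 ⟨hepos, hele⟩,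
        Finset.mem_filter.2 ⟨Finset.mem_univ _, hxfix⟩⟩
    calc (Finset.univ.filter
        (fun x : F => ¬ (minpoly (ZMod 2) x).natDegree = n)).card
        ≤ B.card := Finset.card_le_card hsub
      _ ≤ ∑ e ∈ Finset.Icc 1 (n / 2),
            (Finset.univ.filter (fun x : F => x ^ 2 ^ e = x)).card :=
          Finset.card_biUnion_le
      _ ≤ ∑ e ∈ Finset.Icc 1 (n / 2), 2 ^ e := by
          apply Finset.sum_le_sum
          intro e he
          have h1e : 1 ≤ e := (Finset.mem_Icc.1 he).1
          have hp1 : 1 < 2 ^ e := Nat.one_lt_two_pow_iff.2 (by omega)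
          have hne0 : (X ^ 2 ^ e - X : F[X]) ≠ 0 :=
            FiniteField.X_pow_card_sub_X_ne_zero F hp1
          have hsub2 : (Finset.univ.filter (fun x : F => x ^ 2 ^ e = x)) ⊆
              (X ^ 2 ^ e - X : F[X]).roots.toFinset := by
            intro x hx
            have hxe : x ^ 2 ^ e = x := (Finset.mem_filter.1 hx).2
            rw [Multiset.mem_toFinset, mem_roots hne0]
            simp [IsRoot, hxe]
          calc (Finset.univ.filter (fun x : F => x ^ 2 ^ e = x)).card
              ≤ (X ^ 2 ^ e - X : F[X]).roots.toFinset.card := Finset.card_le_card hsub2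
            _ ≤ (X ^ 2 ^ e - X : F[X]).roots.card := Multiset.toFinset_card_le _
            _ ≤ (X ^ 2 ^ e - X : F[X]).natDegree := card_roots' _
            _ = 2 ^ e := FiniteField.X_pow_card_sub_X_natDegree_eq F hp1
      _ ≤ 2 ^ (n / 2 + 1) := sum_two_pow_Icc_le _
  have hTcard : k * n ≤ T.card := by
    have hsplit := Finset.card_filter_add_card_filter_not
      (s := (Finset.univ : Finset F)) (p := fun x => (minpoly (ZMod 2) x).natDegree = n)
    rw [← hT] at hsplit
    have huniv : (Finset.univ : Finset F).card = 2 ^ n := by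
      rw [Finset.card_univ, hcardF]
    omega
  have hk : k ≤ s₀.card := by
    have h1 : k * n ≤ n * s₀.card := le_trans hTcard hTle
    rw [Nat.mul_comm k n] at h1
    exact Nat.le_of_mul_le_mul_left h1 hn
  obtain ⟨s, hss, hscard⟩ := Finset.exists_subset_card_eq hk
  refine ⟨s, hscard, ?_⟩
  intro g hg
  obtain ⟨x, hxT, hx⟩ := Finset.mem_image.1 (hss hg)
  refine ⟨hx ▸ minpoly.monic (hint x), hx ▸ minpoly.irreducible (hint x), ?_⟩
  rw [← hx]
  exact (Finset.mem_filter.1 hxT).2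

lemma monic_irred_coprime {p q : (ZMod 2)[X]} (hp : Irreducible p) (hq : Irreducible q)
    (hpm : p.Monic) (hqm : q.Monic) (hne : p ≠ q) : IsCoprime p q :=
  (hp.coprime_iff_not_dvd).2 fun hdvd =>
    hne (eq_of_monic_of_associated hpm hqm (hp.associated_of_dvd hq hdvd))

/-- If `m = p₁ * p₂ * p₃` with `p₁, p₂, p₃` pairwise coprime and
`1 < p₁ < p₂ < p₃`, then property `P₂` fails for `m`: there is a squarefree reducible
`f ∈ 𝔽₂[X]` of degree `m` whose order `o(f)` (the least positive `n` with
`f ∣ X^(2^n) - X`) equals `m`. -/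
theorem stmt_15 (p₁ p₂ p₃ m : ℕ) (h1 : 1 < p₁) (h12 : p₁ < p₂) (h23 : p₂ < p₃)
    (hc12 : Nat.Coprime p₁ p₂) (hc13 : Nat.Coprime p₁ p₃) (hc23 : Nat.Coprime p₂ p₃)
    (hm : m = p₁ * p₂ * p₃) :
    ∃ f : Polynomial (ZMod 2), Squarefree f ∧ ¬Irreducible f ∧ f.natDegree = m ∧
      IsLeast {n : ℕ | 0 < n ∧ f ∣ X ^ 2 ^ n - X} m := by
  classical
  -- basic size facts
  have hp3 : 5 ≤ p₃ := by
    by_contra hcon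
    have hp3' : p₃ = 4 := by omega
    have hp1' : p₁ = 2 := by omega
    rw [hp1', hp3'] at hc13
    norm_num [Nat.Coprime] at hc13
  -- the arithmetic decomposition
  set r : ℕ := p₂ * (p₁ - 1) % p₁ with hr_def
  set y : ℕ := p₂ * (p₁ - 1) / p₁ with hy_def
  have hdm : p₁ * y + r = p₂ * (p₁ - 1) := Nat.div_add_mod _ _
  have hr_lt : r < p₁ := Nat.mod_lt _ (by omega)
  have hr_pos : 0 < r := by
    rcases Nat.eq_zero_or_pos r with hr0 | h
    · exfalso
      have hdvd : p₁ ∣ p₂ * (p₁ - 1) := by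
        rw [hr_def] at hr0
        exact Nat.dvd_of_mod_eq_zero hr0
      have hcop1 : Nat.Coprime p₁ (p₁ - 1) := by
        have hstep : Nat.Coprime (p₁ - 1 + 1) (p₁ - 1) := by
          rw [Nat.coprime_self_add_left]
          exact Nat.coprime_one_left _
        have he : p₁ - 1 + 1 = p₁ := by omega
        rwa [he] at hstep
      have hcop : Nat.Coprime p₁ (p₂ * (p₁ - 1)) := Nat.Coprime.mul_right hc12 hcop1
      have : p₁ ∣ Nat.gcd p₁ (p₂ * (p₁ - 1)) := Nat.dvd_gcd dvd_rfl hdvd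
      rw [hcop] at this
      have := Nat.le_of_dvd one_pos this
      omega
    · exact h
  have hy_pos : 1 ≤ y := by
    have h2 : 2 * (p₁ - 1) ≤ p₂ * (p₁ - 1) := Nat.mul_le_mul_right _ (by omega)
    rcases Nat.eq_zero_or_pos y with hy0 | h
    · rw [hy0, Nat.mul_zero] at hdm
      omega
    · exact h
  have hy_le : y ≤ p₂ := by
    have h2 : p₂ * (p₁ - 1) ≤ p₂ * p₁ := Nat.mul_le_mul_left _ (by omega)
    have h3 : p₁ * y ≤ p₁ * p₂ := by
      have : p₂ * p₁ = p₁ * p₂ := Nat.mul_comm _ _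
      omega
    exact Nat.le_of_mul_le_mul_left h3 (by omega)
  set d₁ : ℕ := p₂ * p₃ with hd₁_def
  set d₂ : ℕ := p₁ * p₃ with hd₂_def
  have hd₁_ge : 15 ≤ d₁ := by
    calc 15 = 3 * 5 := by norm_num
      _ ≤ p₂ * p₃ := Nat.mul_le_mul (by omega) hp3
  have hd₂_ge : 10 ≤ d₂ := by
    calc 10 = 2 * 5 := by norm_num
      _ ≤ p₁ * p₃ := Nat.mul_le_mul (by omega) hp3
  have hp₃_le_d₂ : p₃ ≤ d₂ := Nat.le_mul_of_pos_left _ (by omega)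
  have hd₁_ne_d₂ : d₁ ≠ d₂ := by
    intro h
    have : p₂ = p₁ := Nat.eq_of_mul_eq_mul_right (by omega) h
    omega
  have hp₃_lt_d₁ : p₃ < d₁ := by
    calc p₃ < 3 * p₃ := by omega
      _ ≤ p₂ * p₃ := Nat.mul_le_mul_right _ (by omega)
  have hp₃_lt_d₂ : p₃ < d₂ := by
    calc p₃ < 2 * p₃ := by omega
      _ ≤ p₁ * p₃ := Nat.mul_le_mul_right _ (by omega)
  -- get the irreducible polynomials
  obtain ⟨sA, hsA_card, hsA⟩ := exists_finset_irreducibles d₁ 1 (by omega)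
    (bound_big (by omega) (by omega))
  obtain ⟨sB, hsB_card, hsB⟩ := exists_finset_irreducibles d₂ y (by omega)
    (bound_big (by omega) (by omega))
  obtain ⟨sC, hsC_card, hsC⟩ := exists_finset_irreducibles p₃ r (by omega)
    (bound_small (by omega) (by omega))
  obtain ⟨g₁, hg₁⟩ := Finset.card_eq_one.1 hsA_card
  have hg₁_props := hsA g₁ (hg₁ ▸ Finset.mem_singleton_self g₁)
  obtain ⟨hg₁_monic, hg₁_irr, hg₁_deg⟩ := hg₁_props
  -- the finset of factors
  have hBC : Disjoint sB sC := by
    rw [Finset.disjoint_left]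
    intro g hgB hgC
    have h1 := (hsB g hgB).2.2
    have h2 := (hsC g hgC).2.2
    omega
  have hg₁_notin : g₁ ∉ sB ∪ sC := by
    intro h
    rcases Finset.mem_union.1 h with h | h
    · have := (hsB g₁ h).2.2
      omega
    · have := (hsC g₁ h).2.2
      omega
  set S : Finset (ZMod 2)[X] := insert g₁ (sB ∪ sC) with hS_def
  have hS_props : ∀ g ∈ S, g.Monic ∧ Irreducible g ∧ g.natDegree ∣ m := by
    intro g hg
    rcases Finset.mem_insert.1 hg with rfl | hg'
    · exact ⟨hg₁_monic, hg₁_irr, hg₁_deg ▸ ⟨p₁, by rw [hm, hd₁_def]; ring⟩⟩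
    · rcases Finset.mem_union.1 hg' with h | h
      · obtain ⟨hmo, hir, hde⟩ := hsB g h
        exact ⟨hmo, hir, hde ▸ ⟨p₂, by rw [hm, hd₂_def]; ring⟩⟩
      · obtain ⟨hmo, hir, hde⟩ := hsC g h
        exact ⟨hmo, hir, hde ▸ ⟨p₁ * p₂, by rw [hm]; ring⟩⟩
  set f : (ZMod 2)[X] := ∏ g ∈ S, g with hf_def
  -- degree computation
  have hne_BC : ∀ g ∈ sB ∪ sC, g ≠ 0 := by
    intro g hg
    rcases Finset.mem_union.1 hg with h | h
    · exact (hsB g h).1.ne_zero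
    · exact (hsC g h).1.ne_zero
  have hdU : (∏ g ∈ sB ∪ sC, g).natDegree = y * d₂ + r * p₃ := by
    rw [Polynomial.natDegree_prod _ _ hne_BC, Finset.sum_union hBC]
    congr 1
    · rw [Finset.sum_congr rfl (fun g hg => (hsB g hg).2.2), Finset.sum_const, smul_eq_mul,
        hsB_card]
    · rw [Finset.sum_congr rfl (fun g hg => (hsC g hg).2.2), Finset.sum_const, smul_eq_mul,
        hsC_card]
  have hprod_ne : (∏ g ∈ sB ∪ sC, g) ≠ 0 := Finset.prod_ne_zero_iff.2 hne_BC
  have hfactor : f = g₁ * ∏ g ∈ sB ∪ sC, g := Finset.prod_insert hg₁_notin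
  have hfdeg : f.natDegree = m := by
    rw [hfactor, Polynomial.natDegree_mul hg₁_monic.ne_zero hprod_ne, hdU, hg₁_deg]
    obtain ⟨u, hu⟩ : ∃ u, p₁ = u + 1 := ⟨p₁ - 1, by omega⟩
    rw [hu, Nat.add_sub_cancel] at hdm
    calc d₁ + (y * d₂ + r * p₃) = p₃ * (p₂ + ((u + 1) * y + r)) := by
          rw [hd₁_def, hd₂_def, hu]; ring
      _ = p₃ * (p₂ + p₂ * u) := by rw [hdm]
      _ = m := by rw [hm, hu]; ring
  -- pairwise coprime
  have hpairwise : (S : Set (ZMod 2)[X]).Pairwise (Function.onFun IsCoprime (id : (ZMod 2)[X] → _)) := by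
    intro p hp q hq hne
    obtain ⟨hpm, hpi, -⟩ := hS_props p hp
    obtain ⟨hqm, hqi, -⟩ := hS_props q hq
    exact monic_irred_coprime hpi hqi hpm hqm hne
  -- f divides X^(2^m) - X
  have hm_pos : 0 < m := by
    rw [hm]
    exact Nat.mul_pos (Nat.mul_pos (by omega) (by omega)) (by omega)
  have hfdvd : f ∣ X ^ 2 ^ m - X := by
    apply Finset.prod_dvd_of_coprime hpairwise
    intro g hg
    obtain ⟨-, hgi, hgd⟩ := hS_props g hg
    exact (irred_dvd_X_pow_sub_X_iff hgi m).2 hgd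
  -- squarefree
  have hsep : (X ^ 2 ^ m - X : (ZMod 2)[X]).Separable :=
    galois_poly_separable 2 (2 ^ m) (dvd_pow_self 2 (by omega))
  have hsqf : Squarefree f := (hsep.squarefree).squarefree_of_dvd hfdvd
  -- not irreducible
  have hnotirr : ¬Irreducible f := by
    intro hf
    rcases hf.isUnit_or_isUnit hfactor with hu | hu
    · exact hg₁_irr.not_isUnit hu
    · have := Polynomial.natDegree_eq_zero_of_isUnit hu
      rw [hdU] at this
      have : 0 < r * p₃ := Nat.mul_pos hr_pos (by omega)
      omega
  refine ⟨f, hsqf, hnotirr, hfdeg, ⟨⟨hm_pos, hfdvd⟩, ?_⟩⟩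
  -- lower bound
  rintro n ⟨hn0, hndvd⟩
  have hg₁_mem : g₁ ∈ S := Finset.mem_insert_self _ _
  have hd₁_dvd_n : d₁ ∣ n := by
    have h := (Finset.dvd_prod_of_mem id hg₁_mem).trans hndvd
    have := (irred_dvd_X_pow_sub_X_iff hg₁_irr n).1 h
    rwa [hg₁_deg] at this
  obtain ⟨h₀, hh₀⟩ : ∃ h₀, h₀ ∈ sB := Finset.Nonempty.exists_mem (by
    rw [← Finset.card_pos, hsB_card]; omega)
  obtain ⟨hh₀m, hh₀i, hh₀d⟩ := hsB h₀ hh₀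
  have hd₂_dvd_n : d₂ ∣ n := by
    have hmem : h₀ ∈ S := Finset.mem_insert_of_mem (Finset.mem_union_left _ hh₀)
    have h := (Finset.dvd_prod_of_mem id hmem).trans hndvd
    have := (irred_dvd_X_pow_sub_X_iff hh₀i n).1 h
    rwa [hh₀d] at this
  have hp₁n : p₁ ∣ n := (dvd_mul_right p₁ p₃).trans hd₂_dvd_n
  have hp₂n : p₂ ∣ n := (dvd_mul_right p₂ p₃).trans hd₁_dvd_n
  have hp₃n : p₃ ∣ n := (dvd_mul_left p₃ p₂).trans hd₁_dvd_n
  have h12n : p₁ * p₂ ∣ n := Nat.Coprime.mul_dvd_of_dvd_of_dvd hc12 hp₁n hp₂n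
  have hcop : Nat.Coprime (p₁ * p₂) p₃ := Nat.Coprime.mul hc13 hc23
  have hmn : m ∣ n := by
    rw [hm]
    exact Nat.Coprime.mul_dvd_of_dvd_of_dvd hcop h12n hp₃n
  exact Nat.le_of_dvd hn0 hmn
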